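/- Every finitely generated semisimple module is Rad-supplementing. -/

import Mathlib

universe u v

/-- The radical of a module: the intersection of all maximal submodules. -/
def moduleRad (R : Type u) [Ring R] (M : Type v) [AddCommGroup M] [Module R M] :
    Submodule R M :=
  sInf {m : Submodule R M | IsCoatom m}

/-- `V` is a Rad-supplement of `U` in the ambient module: `U + V = ⊤` and
`U ⊓ V ≤ Rad V` (viewed inside the ambient module). -/
def IsRadSupplementOf (R : Type u) [Ring R] {N : Type v} [AddCommGroup N] [Module R N]
    (U V : Submodule R N) : Prop :=
  U ⊔ V = ⊤ ∧ U ⊓ V ≤ Submodule.map V.subtype (moduleRad R V)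

/-- `M` is Rad-supplementing: in every module containing it (i.e. every embedding into a
module `N`), its image has a Rad-supplement. -/
def IsRadSupplementing (R : Type u) [Ring R] (M : Type v) [AddCommGroup M] [Module R M] :
    Prop :=
  ∀ (N : ModuleCat.{v} R) (f : M →ₗ[R] N), Function.Injective f →
    ∃ V : Submodule R N, IsRadSupplementOf R (LinearMap.range f) V

section Aux

variable {R : Type u} [Ring R]

/-- Any linear map sends the radical into the radical. -/
theorem moduleRad_map_le {N : Type v} {P : Type v} [AddCommGroup N] [Module R N]
    [AddCommGroup P] [Module R P] (f : N →ₗ[R] P) :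
    Submodule.map f (moduleRad R N) ≤ moduleRad R P := by
  refine le_sInf fun m hm => ?_
  rw [Submodule.map_le_iff_le_comap]
  by_cases htop : Submodule.comap f m = ⊤
  · exact le_of_le_of_eq le_top htop.symm
  · refine sInf_le ⟨htop, fun K hK => ?_⟩
    obtain ⟨k, hkK, hkm⟩ := SetLike.exists_of_lt hK
    have hfk : f k ∉ m := hkm
    have hsup : m ⊔ Submodule.span R {f k} = ⊤ := by
      refine hm.2 _ (lt_of_le_of_ne le_sup_left fun h => hfk ?_)
      have : f k ∈ m ⊔ Submodule.span R {f k} :=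
        Submodule.mem_sup_right (Submodule.mem_span_singleton_self (f k))
      rwa [← h] at this
    rw [eq_top_iff]
    intro y _
    have hy : f y ∈ m ⊔ Submodule.span R {f k} := hsup ▸ Submodule.mem_top
    obtain ⟨m₀, hm₀, z, hz, hyz⟩ := Submodule.mem_sup.mp hy
    obtain ⟨r, rfl⟩ := Submodule.mem_span_singleton.mp hz
    have h0 : y - r • k ∈ Submodule.comap f m := by
      simp only [Submodule.mem_comap, map_sub, map_smul]
      have : f y - r • f k = m₀ := by rw [← hyz]; abel
      rwa [this]
    have h1 : y - r • k ∈ K := hK.le h0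
    have h2 : r • k ∈ K := K.smul_mem r hkK
    have := K.add_mem h1 h2
    simpa using this

/-- The radical of a semisimple module is zero. -/
theorem moduleRad_eq_bot_of_semisimple (B : Type v) [AddCommGroup B] [Module R B]
    [IsSemisimpleModule R B] : moduleRad R B = ⊥ := by
  rcases eq_bot_or_exists_atom_le (moduleRad R B) with h | ⟨a, ha, hle⟩
  · exact h
  · obtain ⟨c, hc⟩ := exists_isCompl a
    have hcoatom : IsCoatom c := hc.isAtom_iff_isCoatom.mp ha
    have h1 : moduleRad R B ≤ c := sInf_le hcoatom
    have hac : a ≤ c := hle.trans h1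
    have : a = ⊥ := hc.disjoint.eq_bot_of_le hac
    exact absurd this ha.1

variable {N : Type v} [AddCommGroup N] [Module R N]

/-- A finitely generated semisimple submodule meeting the radical trivially
is a direct summand. -/
theorem exists_isCompl_of_disjoint_rad (U : Submodule R N)
    [IsSemisimpleModule R U] [Module.Finite R U] :
    ∀ b : Submodule R U, Submodule.map U.subtype b ⊓ moduleRad R N = ⊥ →
      ∃ V : Submodule R N, IsCompl (Submodule.map U.subtype b) V := by
  have : IsArtinian R U := inferInstance
  intro b
  induction b using WellFoundedLT.induction with
  | _ b IH =>
  intro hrad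
  rcases eq_or_ne b ⊥ with rfl | hb
  · exact ⟨⊤, by simpa using isCompl_bot_top⟩
  · obtain ⟨a, ha, hab⟩ := (eq_bot_or_exists_atom_le b).resolve_left hb
    set B : Submodule R N := Submodule.map U.subtype b with hB
    set S : Submodule R N := Submodule.map U.subtype a with hS
    have hSB : S ≤ B := Submodule.map_mono hab
    have hSatom : IsAtom S := by
      rw [← isSimpleModule_iff_isAtom]
      have : IsSimpleModule R a := isSimpleModule_iff_isAtom.mpr ha
      exact IsSimpleModule.congr
        (Submodule.equivMapOfInjective U.subtype U.injective_subtype a).symm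
    -- S is not contained in the radical
    have hSrad : ¬ S ≤ moduleRad R N := by
      intro h
      have h2 : S ≤ B ⊓ moduleRad R N := le_inf hSB h
      rw [hrad, le_bot_iff] at h2
      exact hSatom.1 h2
    -- get a coatom m avoiding S
    have hex : ∃ m ∈ {m : Submodule R N | IsCoatom m}, ¬ S ≤ m := by
      by_contra h
      push_neg at h
      exact hSrad (le_sInf h)
    obtain ⟨m, hm, hSm⟩ := hex
    have hsupSm : S ⊔ m = ⊤ :=
      hm.2 _ (lt_of_le_of_ne le_sup_right fun h => hSm (le_sup_left.trans h.ge))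
    -- smaller submodule
    set b' : Submodule R U := b ⊓ Submodule.comap U.subtype m with hb'
    have hb'B : Submodule.map U.subtype b' = B ⊓ m := by
      rw [hb', Submodule.map_inf _ U.injective_subtype, Submodule.map_comap_subtype,
        ← inf_assoc, inf_eq_left.mpr (Submodule.map_subtype_le U b)]
    have hlt : b' < b := by
      refine lt_of_le_of_ne inf_le_left fun h => hSm ?_
      have hbm : B ≤ m := by
        rw [hB, ← h, hb'B]
        exact inf_le_right
      exact hSB.trans hbm
    have hrad' : Submodule.map U.subtype b' ⊓ moduleRad R N = ⊥ := by
      rw [hb'B, eq_bot_iff, ← hrad]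
      exact inf_le_inf_right _ inf_le_left
    obtain ⟨W, hW⟩ := IH b' hlt hrad'
    rw [hb'B] at hW
    refine ⟨m ⊓ W, IsCompl.of_eq ?_ ?_⟩
    · rw [← inf_assoc]
      exact hW.disjoint.eq_bot
    · have h1 : (B ⊓ m) ⊔ (m ⊓ W) = m := by
        have h := sup_inf_assoc_of_le W (inf_le_right : B ⊓ m ≤ m)
        rw [hW.codisjoint.eq_top, top_inf_eq, inf_comm W m] at h
        exact h.symm
      refine eq_top_iff.mpr ?_
      calc (⊤ : Submodule R N) = S ⊔ m := hsupSm.symm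
        _ = S ⊔ ((B ⊓ m) ⊔ (m ⊓ W)) := by rw [h1]
        _ ≤ B ⊔ (m ⊓ W) := sup_le (hSB.trans le_sup_left)
            (sup_le (inf_le_left.trans le_sup_left) le_sup_right)

end Aux

/-- Every finitely generated semisimple module is Rad-supplementing. -/
theorem isRadSupplementing_of_fg_semisimple
    (R : Type u) [Ring R] (M : Type v) [AddCommGroup M] [Module R M]
    [IsSemisimpleModule R M] [Module.Finite R M] : IsRadSupplementing R M := by
  intro N f hf
  set U : Submodule R N := LinearMap.range f with hU
  have hUss : IsSemisimpleModule R U := IsSemisimpleModule.range f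
  have hUfin : Module.Finite R U := Module.Finite.range f
  set Rd : Submodule R N := moduleRad R N with hRd
  -- split U = A ⊕ B with A = U ⊓ Rad N
  set A : Submodule R N := U ⊓ Rd with hA
  have hAU : A ≤ U := inf_le_left
  obtain ⟨b', hb'⟩ := exists_isCompl (Submodule.comap U.subtype A)
  set B : Submodule R N := Submodule.map U.subtype b' with hB
  have hBU : B ≤ U := Submodule.map_subtype_le U b'
  have hABsup : A ⊔ B = U := by
    have h := congrArg (Submodule.map U.subtype) hb'.codisjoint.eq_top
    rwa [Submodule.map_sup, Submodule.map_comap_subtype, Submodule.map_top,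
      Submodule.range_subtype, inf_eq_right.mpr hAU] at h
  have hABinf : A ⊓ B = ⊥ := by
    have h := congrArg (Submodule.map U.subtype) hb'.disjoint.eq_bot
    rwa [Submodule.map_inf _ U.injective_subtype, Submodule.map_comap_subtype,
      Submodule.map_bot, inf_eq_right.mpr hAU] at h
  have hBrad : B ⊓ Rd = ⊥ := by
    rw [eq_bot_iff, ← hABinf]
    exact le_inf (le_inf (inf_le_left.trans hBU) inf_le_right) inf_le_left
  rw [hB, hRd] at hBrad
  obtain ⟨V, hV⟩ := exists_isCompl_of_disjoint_rad U b' hBrad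
  rw [← hB] at hV
  -- B is semisimple
  have hBss : IsSemisimpleModule R B :=
    IsSemisimpleModule.congr
      (Submodule.equivMapOfInjective U.subtype U.injective_subtype b').symm
  -- the radical of N equals the image of the radical of V
  have hradV : Rd = Submodule.map V.subtype (moduleRad R V) := by
    apply le_antisymm
    · intro x hx
      have hxB : (B.projectionOnto V hV) x ∈ moduleRad R B :=
        moduleRad_map_le (B.projectionOnto V hV) (Submodule.mem_map_of_mem hx)
      rw [moduleRad_eq_bot_of_semisimple (R := R) B, Submodule.mem_bot] at hxB
      have hdecomp := Submodule.projection_add_projection_eq_self hV x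
      rw [Submodule.projection_apply, Submodule.projection_apply] at hdecomp
      rw [hxB] at hdecomp
      simp only [Submodule.coe_zero, zero_add] at hdecomp
      have hxV : (V.projectionOnto B hV.symm) x ∈ moduleRad R V :=
        moduleRad_map_le (V.projectionOnto B hV.symm) (Submodule.mem_map_of_mem hx)
      exact ⟨_, hxV, hdecomp⟩
    · exact moduleRad_map_le V.subtype
  refine ⟨V, ?_, ?_⟩
  · rw [eq_top_iff, ← hV.codisjoint.eq_top]
    exact sup_le (hBU.trans le_sup_left) le_sup_right
  · intro x hx
    obtain ⟨hxU, hxV⟩ := hx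
    rw [← hABsup] at hxU
    obtain ⟨a, ha, bb, hbb, rfl⟩ := Submodule.mem_sup.mp hxU
    have haRd : a ∈ Rd := ha.2
    have haV : a ∈ V := by
      rw [hradV] at haRd
      obtain ⟨y, _, hy⟩ := haRd
      exact hy ▸ y.2
    have hbbV : bb ∈ V := by
      have h : bb = (a + bb) - a := by abel
      rw [h]
      exact V.sub_mem hxV haV
    have hbb0 : bb = 0 := by
      have h : bb ∈ B ⊓ V := ⟨hbb, hbbV⟩
      rwa [hV.disjoint.eq_bot, Submodule.mem_bot] at h
    rw [hbb0, add_zero, ← hradV]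
    exact ha.2
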